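/- Let P be a two-color grid poset with the max property, L := J_color(P), t ∈ L with t ≠ max, and γ := κ(t). Then the set {s ∈ comp_γ(t) : s ≠ max and κ(s) = γ} is a sub-face of comp_γ(t) with respect to the poset isomorphism φ. -/

import Mathlib

open scoped Classical

structure GridData (P : Type) [PartialOrder P] where
  m : ℕ
  chain : P → ℕ
  color : P → Fin 2

def IsIdeal {P : Type} [PartialOrder P] (t : Finset P) : Prop :=
  ∀ ⦃x⦄, x ∈ t → ∀ ⦃y⦄, y ≤ x → y ∈ t

namespace GridData

variable {P : Type} [PartialOrder P] [Fintype P]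

/-- The defining properties of a grid poset. -/
def IsGridPoset (G : GridData P) : Prop :=
  1 ≤ G.m ∧
  (∀ u : P, G.chain u ∈ Finset.Icc 1 G.m) ∧
  (∀ i ∈ Finset.Icc 1 G.m, ∃ u : P, G.chain u = i) ∧
  (∀ u v : P, G.chain u = G.chain v → u ≤ v ∨ v ≤ u) ∧
  (∀ u v : P, u ⋖ v → G.chain u = G.chain v ∨ G.chain u = G.chain v + 1)

/-- The defining properties of a two-color grid poset. -/
def IsTwoColorGridPoset (G : GridData P) : Prop :=
  G.IsGridPoset ∧
  (∀ u v : P, G.chain u = G.chain v → G.color u = G.color v) ∧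
  (∀ u v : P, Relation.ReflTransGen (fun x y : P => x ⋖ y ∨ y ⋖ x) u v →
    G.chain u = G.chain v + 1 → G.color u ≠ G.color v)

/-- The max property. -/
def MaxProperty (G : GridData P) : Prop :=
  (∀ u : P, IsMax u → G.chain u ≤ 2) ∧
  (∀ u v : P, IsMax u → IsMax v → u ≠ v → G.color u ≠ G.color v)

/-- The fiber `C i` of the chain function. -/
def fiber (G : GridData P) (i : ℕ) : Finset P :=
  Finset.univ.filter (fun u => G.chain u = i)

/-- One step in a `γ`-component of `J_color(P)`: add or remove a single vertex of
color `γ` while both sets are order ideals. -/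
def GStep (G : GridData P) (γ : Fin 2) (s t : Finset P) : Prop :=
  IsIdeal s ∧ IsIdeal t ∧ ∃ u : P, G.color u = γ ∧
    ((u ∉ s ∧ t = insert u s) ∨ (u ∉ t ∧ s = insert u t))

/-- The `γ`-component of `t` in `J_color(P)`. -/
def comp (G : GridData P) (γ : Fin 2) (t : Finset P) : Set (Finset P) :=
  {s | Relation.ReflTransGen (G.GStep γ) t s}

noncomputable def minCard (G : GridData P) (γ : Fin 2) (t : Finset P) : ℕ :=
  sInf (Finset.card '' G.comp γ t)

noncomputable def maxCard (G : GridData P) (γ : Fin 2) (t : Finset P) : ℕ :=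
  sSup (Finset.card '' G.comp γ t)

/-- `m_γ(t) = 2 ρ_γ(t) - l_γ(t)`. -/
noncomputable def mcoord (G : GridData P) (γ : Fin 2) (t : Finset P) : ℤ :=
  2 * ((t.card : ℤ) - (G.minCard γ t : ℤ)) - ((G.maxCard γ t : ℤ) - (G.minCard γ t : ℤ))

/-- The weight of an element of `J_color(P)` (color `0` is α, color `1` is β). -/
noncomputable def wt (G : GridData P) (t : Finset P) : Fin 2 → ℤ :=
  ![G.mcoord 0 t, G.mcoord 1 t]

/-- `J_color(P)` is `M`-structured. -/
def MStructured (G : GridData P) (M : Matrix (Fin 2) (Fin 2) ℤ) : Prop :=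
  ∀ s t : Finset P, IsIdeal s → IsIdeal t → ∀ u : P, u ∉ s → t = insert u s →
    G.wt s + M (G.color u) = G.wt t

end GridData

namespace GridData

variable {P : Type} [PartialOrder P] [Fintype P]

/-- The indices `i ∈ {1,…,m}` of the fibers whose vertices have color `γ`. -/
def colorIdx (G : GridData P) (γ : Fin 2) : Finset ℕ :=
  (Finset.Icc 1 G.m).filter (fun i => ∃ u : P, G.chain u = i ∧ G.color u = γ)

/-- `I_j`: the largest subset `I` of the fiber `C i` such that both `t ∪ I` and
`t \ I` are order ideals (realized as the union of all such subsets). -/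
noncomputable def Imax (G : GridData P) (t : Finset P) (i : ℕ) : Finset P :=
  (G.fiber i).filter (fun x =>
    ∃ J ⊆ G.fiber i, x ∈ J ∧ IsIdeal (t ∪ J) ∧ IsIdeal (t \ J))

/-- The largest index `k ∈ {1,…,m}` such that the fiber `C k` is not contained in `t`. -/
noncomputable def kIdx (G : GridData P) (t : Finset P) : ℕ :=
  sSup {i | i ∈ Finset.Icc 1 G.m ∧ ¬ G.fiber i ⊆ t}

/-- `z_i`, the maximal element of the (chain) fiber `C i`. -/
noncomputable def zEl [Nonempty P] (G : GridData P) (i : ℕ) : P :=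
  if h : ∃ z ∈ G.fiber i, ∀ w ∈ G.fiber i, w ≤ z then h.choose else Classical.arbitrary P

/-- `v(t) := z_k` where `k` is the largest index with `C_k ⊄ t`. -/
noncomputable def vOf [Nonempty P] (G : GridData P) (t : Finset P) : P :=
  G.zEl (G.kIdx t)

/-- The vertex-coloring function `κ(t) := color(v(t))`. -/
noncomputable def kOf [Nonempty P] (G : GridData P) (t : Finset P) : Fin 2 :=
  G.color (G.vOf t)

/-- A face of `comp_γ(t)` with respect to the isomorphism
`φ(s) = (s ∩ I_1, …, s ∩ I_k)`: for some color-`γ` fiber index `q`, the set of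
elements of `comp_γ(t)` whose `q`-th coordinate `s ∩ I_q` is the maximal element
`I_q` of the chain `J(I_q)`. -/
def IsFace (G : GridData P) (γ : Fin 2) (t : Finset P) (S : Set (Finset P)) : Prop :=
  ∃ q ∈ G.colorIdx γ, S = {s | s ∈ G.comp γ t ∧ G.Imax t q ⊆ s}

/-- A sub-face of `comp_γ(t)`: the complement (within `comp_γ(t)`) of a face. -/
def IsSubFace (G : GridData P) (γ : Fin 2) (t : Finset P) (S : Set (Finset P)) : Prop :=
  ∃ q ∈ G.colorIdx γ, S = {s | s ∈ G.comp γ t ∧ ¬ G.Imax t q ⊆ s}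

end GridData


section AuxProof
variable {P : Type} [PartialOrder P] [Fintype P]

/-- In a finite poset, if `x < y` there is a cover `x ⋖ w` with `w ≤ y`. -/
lemma aux_exists_covby {x y : P} (h : x < y) : ∃ w : P, x ⋖ w ∧ w ≤ y := by
  have hne : (Finset.univ.filter (fun c => x < c ∧ c ≤ y)).Nonempty :=
    ⟨y, by simp [h, le_refl]⟩
  obtain ⟨w, hw, hmin⟩ : ∃ w ∈ Finset.univ.filter (fun c => x < c ∧ c ≤ y),
      ∀ c ∈ Finset.univ.filter (fun c => x < c ∧ c ≤ y), ¬ c < w := by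
    obtain ⟨w, hw⟩ := Finset.exists_minimal hne
    exact ⟨w, hw.prop, fun c hc hcw => hcw.not_ge (hw.2 hc hcw.le)⟩
  simp only [Finset.mem_filter] at hw
  refine ⟨w, ⟨hw.2.1, ?_⟩, hw.2.2⟩
  intro c hxc hcw
  exact hmin c (by simp [hxc, le_trans hcw.le hw.2.2]) hcw

lemma aux_up_induction (Q : P → P → Prop)
    (hrefl : ∀ x : P, Q x x)
    (hstep : ∀ x w y : P, x ⋖ w → w ≤ y → Q w y → Q x y) :
    ∀ x y : P, x ≤ y → Q x y := by
  suffices h : ∀ n : ℕ, ∀ x y : P,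
      (Finset.univ.filter (fun c => x < c ∧ c ≤ y)).card ≤ n → x ≤ y → Q x y by
    intro x y hxy; exact h _ x y le_rfl hxy
  intro n
  induction n with
  | zero =>
    intro x y hcard hxy
    rcases eq_or_lt_of_le hxy with rfl | hlt
    · exact hrefl x
    · exfalso
      have hm : y ∈ Finset.univ.filter (fun c => x < c ∧ c ≤ y) := by simp [hlt]
      have := Finset.card_pos.mpr ⟨y, hm⟩
      omega
  | succ n ih =>
    intro x y hcard hxy
    rcases eq_or_lt_of_le hxy with rfl | hlt
    · exact hrefl x
    · obtain ⟨w, hcov, hwy⟩ := aux_exists_covby hlt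
      refine hstep x w y hcov hwy (ih w y ?_ hwy)
      have hsub : (Finset.univ.filter (fun c => w < c ∧ c ≤ y)) ⊆
          (Finset.univ.filter (fun c => x < c ∧ c ≤ y)).erase w := by
        intro c hc
        simp only [Finset.mem_filter] at hc
        simp only [Finset.mem_erase, Finset.mem_filter]
        exact ⟨ne_of_gt hc.2.1, by simp, lt_trans hcov.lt hc.2.1, hc.2.2⟩
      have hwmem : w ∈ Finset.univ.filter (fun c => x < c ∧ c ≤ y) := by
        simp [hcov.lt, hwy]
      have := Finset.card_le_card hsub
      rw [Finset.card_erase_of_mem hwmem] at this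
      omega

variable (G : GridData P)

lemma aux_chain_anti
    (hcov : ∀ u v : P, u ⋖ v → G.chain u = G.chain v ∨ G.chain u = G.chain v + 1)
    {x y : P} (hxy : x ≤ y) : G.chain y ≤ G.chain x := by
  refine aux_up_induction (fun a b => G.chain b ≤ G.chain a) (fun _ => le_rfl)
    (fun a w b hcab hwb hQ => ?_) x y hxy
  rcases hcov a w hcab with h | h <;> omega

lemma aux_mono_chain
    (hcov : ∀ u v : P, u ⋖ v → G.chain u = G.chain v ∨ G.chain u = G.chain v + 1)
    (hcc : ∀ u v : P, u ⋖ v → G.chain u = G.chain v + 1 → G.color u ≠ G.color v)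
    {x y : P} (hxy : x ≤ y)
    (hcol : ∀ c : P, x ≤ c → c ≤ y → G.color c = G.color x) :
    G.chain x = G.chain y := by
  refine aux_up_induction
    (fun a b => (∀ c : P, a ≤ c → c ≤ b → G.color c = G.color a) → G.chain a = G.chain b)
    (fun _ _ => rfl) (fun a w b hcab hwb hQ hcols => ?_) x y hxy hcol
  have hcw : G.color w = G.color a := hcols w hcab.le hwb
  have h1 : G.chain a = G.chain w := by
    rcases hcov a w hcab with h | h
    · exact h
    · exact absurd (hcw.symm) (hcc a w hcab h)
  have h2 : G.chain w = G.chain b := by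
    refine hQ (fun c hwc hcb => ?_)
    rw [hcols c (le_trans hcab.le hwc) hcb, hcw]
  omega


variable [Nonempty P]

lemma aux_zEl_spec
    (hIcc : ∀ u : P, G.chain u ∈ Finset.Icc 1 G.m)
    (hsurj : ∀ i ∈ Finset.Icc 1 G.m, ∃ u : P, G.chain u = i)
    (htotal : ∀ u v : P, G.chain u = G.chain v → u ≤ v ∨ v ≤ u)
    {i : ℕ} (hi : i ∈ Finset.Icc 1 G.m) :
    G.chain (G.zEl i) = i ∧ ∀ w : P, G.chain w = i → w ≤ G.zEl i := by
  obtain ⟨u, hu⟩ := hsurj i hi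
  have hune : u ∈ G.fiber i := by simp [GridData.fiber, hu]
  obtain ⟨z, hz, hzmax⟩ : ∃ z ∈ G.fiber i, ∀ c ∈ G.fiber i, ¬ z < c := by
    obtain ⟨z, hz⟩ := Finset.exists_maximal ⟨u, hune⟩
    exact ⟨z, hz.prop, fun c hc hzc => hzc.not_ge (hz.2 hc hzc.le)⟩
  have hex : ∃ z ∈ G.fiber i, ∀ w ∈ G.fiber i, w ≤ z := by
    refine ⟨z, hz, fun w hw => ?_⟩
    have hcw : G.chain w = G.chain z := by
      simp only [GridData.fiber, Finset.mem_filter] at hw hz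
      rw [hw.2, hz.2]
    rcases htotal w z hcw with h | h
    · exact h
    · rcases eq_or_lt_of_le h with h' | h'
      · exact le_of_eq h'.symm
      · exact absurd h' (hzmax w hw)
  rw [GridData.zEl]
  split
  · next h =>
      obtain ⟨hmem, hle⟩ := h.choose_spec
      refine ⟨(Finset.mem_filter.mp hmem).2, fun w hw => hle w ?_⟩
      exact Finset.mem_filter.mpr ⟨Finset.mem_univ w, hw⟩
  · next h => exact absurd hex h

lemma aux_kIdx_le (t : Finset P) {i : ℕ}
    (hi : i ∈ Finset.Icc 1 G.m) (hns : ¬ G.fiber i ⊆ t) : i ≤ G.kIdx t := by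
  refine le_csSup ⟨G.m, fun j hj => ?_⟩ ⟨hi, hns⟩
  exact (Finset.mem_Icc.mp hj.1).2

lemma aux_kIdx_mem (hIcc : ∀ u : P, G.chain u ∈ Finset.Icc 1 G.m)
    (t : Finset P) (htop : t ≠ Finset.univ) :
    (G.kIdx t) ∈ Finset.Icc 1 G.m ∧ ¬ G.fiber (G.kIdx t) ⊆ t := by
  have hne : ∃ u : P, u ∉ t := by
    by_contra h
    push_neg at h
    exact htop (Finset.eq_univ_iff_forall.mpr h)
  obtain ⟨u, hu⟩ := hne
  have hmem : G.kIdx t ∈ {i | i ∈ Finset.Icc 1 G.m ∧ ¬ G.fiber i ⊆ t} := by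
    refine Nat.sSup_mem ⟨G.chain u, hIcc u, fun hsub => hu (hsub ?_)⟩
      ⟨G.m, fun j hj => (Finset.mem_Icc.mp hj.1).2⟩
    simp [GridData.fiber]
  exact hmem


/-- Elements of the top fiber not in `t` belong to `Imax t k`. -/
lemma aux_b_subset_Imax (hG : G.IsTwoColorGridPoset)
    (t : Finset P) (ht : IsIdeal t) {x : P}
    (hx : G.chain x = G.kIdx t) (hxt : x ∉ t) : x ∈ G.Imax t (G.kIdx t) := by
  obtain ⟨⟨h1m, hIcc, hsurj, htotal, hcov⟩, hfibcol, htc⟩ := hG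
  set k := G.kIdx t with hk
  set J := (G.fiber k).filter (fun w => w ∉ t ∧ w ≤ x) with hJ
  have hxJ : x ∈ J := by
    simp only [hJ, Finset.mem_filter, GridData.fiber, Finset.mem_univ, true_and]
    exact ⟨hx, hxt, le_rfl⟩
  refine Finset.mem_filter.mpr ⟨by simp [GridData.fiber, hx], J, Finset.filter_subset _ _, hxJ, ?_, ?_⟩
  · -- IsIdeal (t ∪ J)
    intro c hc y hyc
    rcases Finset.mem_union.mp hc with hc | hc
    · exact Finset.mem_union_left _ (ht hc hyc)
    · by_cases hyt : y ∈ t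
      · exact Finset.mem_union_left _ hyt
      · simp only [hJ, Finset.mem_filter, GridData.fiber, Finset.mem_univ, true_and] at hc
        have hcy : G.chain c ≤ G.chain y := aux_chain_anti G hcov hyc
        have hychain : G.chain y = k := by
          rcases eq_or_lt_of_le hcy with h | h
          · omega
          · exfalso
            have hsub : G.fiber (G.chain y) ⊆ t := by
              by_contra hns
              have := aux_kIdx_le G t (hIcc y) hns
              omega
            exact hyt (hsub (by simp [GridData.fiber]))
        refine Finset.mem_union_right _ ?_
        simp only [hJ, Finset.mem_filter, GridData.fiber, Finset.mem_univ, true_and]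
        exact ⟨hychain, hyt, le_trans hyc hc.2.2⟩
  · -- IsIdeal (t \ J)
    intro c hc y hyc
    have hct := (Finset.mem_sdiff.mp hc).1
    refine Finset.mem_sdiff.mpr ⟨ht hct hyc, fun hyJ => ?_⟩
    simp only [hJ, Finset.mem_filter] at hyJ
    exact hyJ.2.1 (ht hct hyc)

/-- An element of `t` in the top fiber with no `t`-elements above it outside its
fiber belongs to `Imax`. -/
lemma aux_Ucond_Imax (hG : G.IsTwoColorGridPoset)
    (t : Finset P) (ht : IsIdeal t) {x : P} (hxt : x ∈ t)
    (hU : ∀ y : P, x < y → y ∈ t → G.chain y = G.chain x) :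
    x ∈ G.Imax t (G.chain x) := by
  set J := (G.fiber (G.chain x)).filter (fun w => w ∈ t ∧ x ≤ w) with hJ
  have hxJ : x ∈ J :=
    Finset.mem_filter.mpr ⟨Finset.mem_filter.mpr ⟨Finset.mem_univ x, rfl⟩, hxt, le_rfl⟩
  refine Finset.mem_filter.mpr ⟨by simp [GridData.fiber], J, Finset.filter_subset _ _, hxJ, ?_, ?_⟩
  · -- IsIdeal (t ∪ J)
    intro c hc y hyc
    have hct : c ∈ t := by
      rcases Finset.mem_union.mp hc with hc | hc
      · exact hc
      · exact (Finset.mem_filter.mp hc).2.1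
    exact Finset.mem_union_left _ (ht hct hyc)
  · -- IsIdeal (t \ J)
    intro c hc y hyc
    obtain ⟨hct, hcJ⟩ := Finset.mem_sdiff.mp hc
    refine Finset.mem_sdiff.mpr ⟨ht hct hyc, fun hyJ => ?_⟩
    simp only [hJ, Finset.mem_filter, GridData.fiber, Finset.mem_univ, true_and] at hyJ
    refine hcJ ?_
    have hxc : x ≤ c := le_trans hyJ.2.2 hyc
    have hcchain : G.chain c = G.chain x := by
      rcases eq_or_lt_of_le hxc with h | h
      · rw [← h]
      · exact hU c h hct
    simp only [hJ, Finset.mem_filter, GridData.fiber, Finset.mem_univ, true_and]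
    exact ⟨hcchain, hct, hxc⟩

variable [Nonempty P] in
/-- `z_i` has a cover in the previous fiber when `3 ≤ i ≤ m`. -/
lemma aux_drop (hG : G.IsTwoColorGridPoset) (hmax : G.MaxProperty)
    {i : ℕ} (h3 : 3 ≤ i) (him : i ≤ G.m) :
    ∃ w : P, G.zEl i ⋖ w ∧ G.chain w = i - 1 := by
  obtain ⟨⟨h1m, hIcc, hsurj, htotal, hcov⟩, hfibcol, htc⟩ := hG
  obtain ⟨hzc, hzle⟩ := aux_zEl_spec G hIcc hsurj htotal (i := i) (by simp; omega)
  have hnm : ¬ IsMax (G.zEl i) := by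
    intro h
    have := hmax.1 _ h
    omega
  obtain ⟨b, hb⟩ := not_isMax_iff.mp hnm
  obtain ⟨w, hcw, hwb⟩ := aux_exists_covby hb
  refine ⟨w, hcw, ?_⟩
  rcases hcov _ _ hcw with h | h
  · have hwz := hzle w (by omega)
    exact absurd hcw.lt hwz.not_gt
  · omega

variable [Nonempty P] in
lemma aux_climb (hG : G.IsTwoColorGridPoset) (hmax : G.MaxProperty) :
    ∀ n : ℕ, ∀ i : ℕ, 2 ≤ i → ∀ x : P, G.chain x = i + n →
      ∃ p : P, x ≤ p ∧ G.chain p = i := by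
  obtain ⟨⟨h1m, hIcc, hsurj, htotal, hcov⟩, hfibcol, htc⟩ := hG
  intro n
  induction n with
  | zero => intro i h2 x hx; exact ⟨x, le_rfl, by omega⟩
  | succ n ih =>
    intro i h2 x hx
    have hxm : G.chain x ≤ G.m := (Finset.mem_Icc.mp (hIcc x)).2
    obtain ⟨hzc, hzle⟩ := aux_zEl_spec G hIcc hsurj htotal (i := i + n + 1)
      (by simp; omega)
    obtain ⟨w, hcw, hwchain⟩ := aux_drop G
      ⟨⟨h1m, hIcc, hsurj, htotal, hcov⟩, hfibcol, htc⟩ hmax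
      (i := i + n + 1) (by omega) (by omega)
    obtain ⟨p, hwp, hpchain⟩ := ih i h2 w (by omega)
    exact ⟨p, le_trans (hzle x (by omega)) (le_trans hcw.le hwp), hpchain⟩

variable [Nonempty P] in
lemma aux_z1_isMax (hG : G.IsTwoColorGridPoset) : IsMax (G.zEl 1) := by
  obtain ⟨⟨h1m, hIcc, hsurj, htotal, hcov⟩, hfibcol, htc⟩ := hG
  obtain ⟨hzc, hzle⟩ := aux_zEl_spec G hIcc hsurj htotal (i := 1) (by simp [h1m])
  intro b hb
  have h1 : 1 ≤ G.chain b := (Finset.mem_Icc.mp (hIcc b)).1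
  have h2 : G.chain b ≤ G.chain (G.zEl 1) := aux_chain_anti G hcov hb
  exact hzle b (by omega)

/-- The invariant along `γ`-components. -/
lemma aux_inv (t : Finset P) (ht : IsIdeal t) (γ : Fin 2)
    (hcov : ∀ u v : P, u ⋖ v → G.chain u = G.chain v ∨ G.chain u = G.chain v + 1)
    (hcc : ∀ u v : P, u ⋖ v → G.chain u = G.chain v + 1 → G.color u ≠ G.color v) :
    ∀ s ∈ G.comp γ t, IsIdeal s ∧
      (∀ x : P, G.color x ≠ γ → (x ∈ s ↔ x ∈ t)) ∧
      (∀ x ∈ s, x ∉ t → ∀ y : P, y < x → y ∉ t → G.chain y = G.chain x) ∧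
      (∀ x ∈ t, x ∉ s → ∀ y : P, x < y → y ∈ t → G.chain y = G.chain x) := by
  intro s hs
  induction hs with
  | refl =>
    refine ⟨ht, fun x _ => Iff.rfl, fun x hx hx' => absurd hx hx',
      fun x hx hx' => absurd hx hx'⟩
  | tail _ hstep ih =>
    rename_i b c _
    obtain ⟨hbI, hcI, u, hucol, hcase⟩ := hstep
    rcases hcase with ⟨hub, rfl⟩ | ⟨huc, rfl⟩
    · -- add: c = insert u b
      refine ⟨hcI, ?_, ?_, ?_⟩
      · intro x hxcol
        have hxu : x ≠ u := fun h => hxcol (h ▸ hucol)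
        rw [Finset.mem_insert]
        simp only [hxu, false_or]
        exact ih.2.1 x hxcol
      · intro x hxc hxt y hyx hyt
        by_cases hxu : x = u
        · -- x = u : the monochromatic interval argument
          refine aux_mono_chain G hcov hcc hyx.le ?_
          intro e hye hex
          have het : e ∉ t := fun he => hyt (ht he hye)
          have hec : e ∈ insert u b := hcI hxc hex
          have hecol : G.color e = γ := by
            rcases Finset.mem_insert.mp hec with rfl | heb
            · exact hucol
            · by_contra hne
              exact het ((ih.2.1 e hne).mp heb)
          have hycol : G.color y = γ := by
            have hyb : y ∈ insert u b := hcI hxc hyx.le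
            rcases Finset.mem_insert.mp hyb with rfl | hyb
            · exact hucol
            · by_contra hne
              exact hyt ((ih.2.1 y hne).mp hyb)
          rw [hecol, hycol]
        · have hxb : x ∈ b := by
            rcases Finset.mem_insert.mp hxc with h | h
            · exact absurd h hxu
            · exact h
          exact ih.2.2.1 x hxb hxt y hyx hyt
      · intro x hxt hxc y hxy hyt
        exact ih.2.2.2 x hxt (fun h => hxc (Finset.mem_insert_of_mem h)) y hxy hyt
    · -- remove: b = insert u c
      refine ⟨hcI, ?_, ?_, ?_⟩
      · intro x hxcol
        have hxu : x ≠ u := fun h => hxcol (h ▸ hucol)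
        have h2 := ih.2.1 x hxcol
        rw [Finset.mem_insert] at h2
        simp only [hxu, false_or] at h2
        exact h2
      · intro x hxc hxt y hyx hyt
        exact ih.2.2.1 x (Finset.mem_insert_of_mem hxc) hxt y hyx hyt
      · intro x hxt hxc y hxy hyt
        by_cases hxu : x = u
        · -- x = u : the monochromatic interval argument upward
          refine (aux_mono_chain G hcov hcc hxy.le ?_).symm
          intro e hxe hey
          have het : e ∈ t := ht hyt hey
          have hec : e ∉ c := fun h => hxc (hcI h hxe)
          have hecol : G.color e = γ := by
            by_cases heu : e = u
            · rw [heu, hucol]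
            · have heb : e ∉ insert u c := by simp [heu, hec]
              by_contra hne
              exact heb ((ih.2.1 e hne).mpr het)
          have hxcol : G.color x = γ := hxu ▸ hucol
          rw [hecol, hxcol]
        · have hxb : x ∉ insert u c := by simp [hxu, hxc]
          exact ih.2.2.2 x hxt hxb y hxy hyt

variable [Nonempty P] in
/-- Claim A: fibers above `kIdx t` stay full along the component. -/
lemma aux_fullAbove (hG : G.IsTwoColorGridPoset) (hmax : G.MaxProperty)
    (t : Finset P) (ht : IsIdeal t) (htop : t ≠ Finset.univ)
    (γ : Fin 2) (hγ : γ = G.kOf t)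
    (s : Finset P) (hsI : IsIdeal s)
    (hOnly : ∀ x : P, G.color x ≠ γ → (x ∈ s ↔ x ∈ t)) :
    ∀ x : P, G.kIdx t < G.chain x → x ∈ s := by
  have h1m := hG.1.1
  have hIcc := hG.1.2.1
  have hsurj := hG.1.2.2.1
  have htotal := hG.1.2.2.2.1
  have hcov := hG.1.2.2.2.2
  have hfibcol := hG.2.1
  have hcc : ∀ u v : P, u ⋖ v → G.chain u = G.chain v + 1 → G.color u ≠ G.color v :=
    fun u v hc h => hG.2.2 u v (Relation.ReflTransGen.single (Or.inl hc)) h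
  have hkmem := aux_kIdx_mem G hIcc t htop
  have hk1 : 1 ≤ G.kIdx t := (Finset.mem_Icc.mp hkmem.1).1
  have hkm : G.kIdx t ≤ G.m := (Finset.mem_Icc.mp hkmem.1).2
  have colzk : G.color (G.zEl (G.kIdx t)) = γ := by rw [hγ]; rfl
  have main : ∀ i : ℕ, ∀ x : P, G.chain x = i → G.kIdx t < i → x ∈ s := by
    intro i
    induction i using Nat.strong_induction_on with
    | _ i ih =>
      intro x hxi hki
      by_contra hxs
      have him : i ≤ G.m := by
        have := (Finset.mem_Icc.mp (hIcc x)).2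
        omega
      obtain ⟨hzc, hzle⟩ := aux_zEl_spec G hIcc hsurj htotal
        (i := i) (Finset.mem_Icc.mpr ⟨by omega, him⟩)
      have hxz : x ≤ G.zEl i := hzle x hxi
      have hzs : G.zEl i ∉ s := fun h => hxs (hsI h hxz)
      have hfib : G.fiber i ⊆ t := by
        by_contra hns
        have := aux_kIdx_le G t (Finset.mem_Icc.mpr ⟨by omega, him⟩) hns
        omega
      have hzt : G.zEl i ∈ t := hfib (Finset.mem_filter.mpr ⟨Finset.mem_univ _, hzc⟩)
      have hzcol : G.color (G.zEl i) = γ := by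
        by_contra hne
        exact hzs ((hOnly _ hne).mpr hzt)
      by_cases hism : IsMax (G.zEl i)
      · have h2 := hmax.1 _ hism
        rw [hzc] at h2
        obtain ⟨hz1c, hz1le⟩ := aux_zEl_spec G hIcc hsurj htotal
          (i := 1) (Finset.mem_Icc.mpr ⟨le_rfl, h1m⟩)
        have z1max := aux_z1_isMax G hG
        have hne : G.zEl i ≠ G.zEl 1 := by
          intro h
          rw [h, hz1c] at hzc
          omega
        have hcolne := hmax.2 _ _ hism z1max hne
        have hkeq : G.kIdx t = 1 := by omega
        rw [hkeq] at colzk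
        exact hcolne (by rw [hzcol, colzk])
      · obtain ⟨bb, hbb⟩ := not_isMax_iff.mp hism
        obtain ⟨w, hcw, _⟩ := aux_exists_covby hbb
        rcases hcov _ _ hcw with h | h
        · have hwz := hzle w (by omega)
          exact absurd hcw.lt hwz.not_gt
        · by_cases hkw : G.kIdx t < G.chain w
          · have hws : w ∈ s := ih (G.chain w) (by omega) w rfl hkw
            exact hzs (hsI hws hcw.le)
          · have hwk : G.chain w = G.kIdx t := by omega
            obtain ⟨hzkc, _⟩ := aux_zEl_spec G hIcc hsurj htotal
              (i := G.kIdx t) hkmem.1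
            have hcolw : G.color w = γ := by
              have heq := hfibcol w (G.zEl (G.kIdx t)) (by omega)
              rw [heq, colzk]
            exact hcc _ _ hcw h (by rw [hzcol, hcolw])
  intro x hklt
  exact main (G.chain x) x rfl hklt

variable [Nonempty P] in
/-- Lemma G: if the top incomplete fiber of `t` is full in `s`, the new
vertex-color differs from `γ`. -/
lemma aux_G (hG : G.IsTwoColorGridPoset) (hmax : G.MaxProperty)
    (t : Finset P) (ht : IsIdeal t) (htop : t ≠ Finset.univ)
    (γ : Fin 2) (hγ : γ = G.kOf t)
    (s : Finset P) (hsI : IsIdeal s)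
    (hD : ∀ x ∈ s, x ∉ t → ∀ y : P, y < x → y ∉ t → G.chain y = G.chain x)
    (hA : ∀ x : P, G.kIdx t < G.chain x → x ∈ s)
    (hfk : G.fiber (G.kIdx t) ⊆ s) (hsne : s ≠ Finset.univ) :
    G.color (G.zEl (G.kIdx s)) ≠ γ := by
  have h1m := hG.1.1
  have hIcc := hG.1.2.1
  have hsurj := hG.1.2.2.1
  have htotal := hG.1.2.2.2.1
  have hcov := hG.1.2.2.2.2
  have hfibcol := hG.2.1
  have hcc : ∀ u v : P, u ⋖ v → G.chain u = G.chain v + 1 → G.color u ≠ G.color v :=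
    fun u v hc h => hG.2.2 u v (Relation.ReflTransGen.single (Or.inl hc)) h
  have hkmem := aux_kIdx_mem G hIcc t htop
  have hk1 : 1 ≤ G.kIdx t := (Finset.mem_Icc.mp hkmem.1).1
  have hkm : G.kIdx t ≤ G.m := (Finset.mem_Icc.mp hkmem.1).2
  have hjmem := aux_kIdx_mem G hIcc s hsne
  have hj1 : 1 ≤ G.kIdx s := (Finset.mem_Icc.mp hjmem.1).1
  have hjm : G.kIdx s ≤ G.m := (Finset.mem_Icc.mp hjmem.1).2
  obtain ⟨hzkc, hzkle⟩ := aux_zEl_spec G hIcc hsurj htotal (i := G.kIdx t) hkmem.1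
  obtain ⟨hzjc, hzjle⟩ := aux_zEl_spec G hIcc hsurj htotal (i := G.kIdx s) hjmem.1
  have colzk : G.color (G.zEl (G.kIdx t)) = γ := by rw [hγ]; rfl
  have hzk_t : G.zEl (G.kIdx t) ∉ t := by
    intro h
    refine hkmem.2 (fun w hw => ?_)
    exact ht h (hzkle w (Finset.mem_filter.mp hw).2)
  have hjk : G.kIdx s < G.kIdx t := by
    have hne2 : G.kIdx s ≠ G.kIdx t := fun h => hjmem.2 (h ▸ hfk)
    have hngt : ¬ G.kIdx t < G.kIdx s := by
      intro h
      refine hjmem.2 (fun w hw => hA w ?_)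
      have := (Finset.mem_filter.mp hw).2
      omega
    omega
  by_cases hcase : G.kIdx s + 1 < G.kIdx t
  · exfalso
    obtain ⟨p, hzkp, hpchain⟩ := aux_climb G hG hmax
      (G.kIdx t - (G.kIdx s + 1)) (G.kIdx s + 1) (by omega)
      (G.zEl (G.kIdx t)) (by omega)
    have hplt : G.zEl (G.kIdx t) < p := by
      refine lt_of_le_of_ne hzkp (fun h => ?_)
      rw [← h] at hpchain
      omega
    have hpt : p ∉ t := fun h => hzk_t (ht h hzkp)
    have hfj1 : G.fiber (G.kIdx s + 1) ⊆ s := by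
      by_contra hns
      have := aux_kIdx_le G s (Finset.mem_Icc.mpr ⟨by omega, by omega⟩) hns
      omega
    have hps : p ∈ s := hfj1 (Finset.mem_filter.mpr ⟨Finset.mem_univ _, hpchain⟩)
    have := hD p hps hpt (G.zEl (G.kIdx t)) hplt hzk_t
    omega
  · have hk1' : G.kIdx t = G.kIdx s + 1 := by omega
    intro hcol
    by_cases hism : IsMax (G.zEl (G.kIdx t))
    · have h2 := hmax.1 _ hism
      rw [hzkc] at h2
      obtain ⟨hz1c, hz1le⟩ := aux_zEl_spec G hIcc hsurj htotal
        (i := 1) (Finset.mem_Icc.mpr ⟨le_rfl, h1m⟩)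
      have z1max := aux_z1_isMax G hG
      have hne : G.zEl (G.kIdx t) ≠ G.zEl 1 := by
        intro h
        rw [h, hz1c] at hzkc
        omega
      have hcolne := hmax.2 _ _ hism z1max hne
      have hjeq : G.kIdx s = 1 := by omega
      rw [hjeq] at hcol
      exact hcolne (by rw [colzk, hcol])
    · obtain ⟨bb, hbb⟩ := not_isMax_iff.mp hism
      obtain ⟨w, hcw, _⟩ := aux_exists_covby hbb
      rcases hcov _ _ hcw with h | h
      · have hwz := hzkle w (by omega)
        exact absurd hcw.lt hwz.not_gt
      · have hcolw : G.color w = G.color (G.zEl (G.kIdx s)) :=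
          hfibcol w _ (by omega)
        exact hcc _ _ hcw h (by rw [hcolw, hcol, colzk])

variable [Nonempty P] in
/-- Lemma E: if `Imax t k ⊆ s` then the whole fiber `k` is contained in `s`. -/
lemma aux_E (hG : G.IsTwoColorGridPoset)
    (t : Finset P) (ht : IsIdeal t)
    (s : Finset P) (hIm : G.Imax t (G.kIdx t) ⊆ s)
    (hU : ∀ x ∈ t, x ∉ s → ∀ y : P, x < y → y ∈ t → G.chain y = G.chain x) :
    G.fiber (G.kIdx t) ⊆ s := by
  intro x hx
  have hxchain : G.chain x = G.kIdx t := (Finset.mem_filter.mp hx).2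
  by_cases hxt : x ∈ t
  · by_contra hxs
    have hcond := hU x hxt hxs
    have hmem := aux_Ucond_Imax G hG t ht hxt hcond
    rw [hxchain] at hmem
    exact hxs (hIm hmem)
  · exact hIm (aux_b_subset_Imax G hG t ht hxchain hxt)

end AuxProof

/-- Theorem 5.1: if `P` has the max property, `t ≠ max` and `γ = κ(t)`, then
`{s ∈ comp_γ(t) : s ≠ max and κ(s) = γ}` is a sub-face of `comp_γ(t)`. -/
theorem stmt_14 {P : Type} [PartialOrder P] [Fintype P] [Nonempty P] (G : GridData P)
    (hG : G.IsTwoColorGridPoset) (hmax : G.MaxProperty)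
    (t : Finset P) (ht : IsIdeal t) (htop : t ≠ Finset.univ)
    (γ : Fin 2) (hγ : γ = G.kOf t) :
    G.IsSubFace γ t
      {s | s ∈ G.comp γ t ∧ s ≠ Finset.univ ∧ G.kOf s = γ} := by
  have hIcc := hG.1.2.1
  have hcov := hG.1.2.2.2.2
  have hcc : ∀ u v : P, u ⋖ v → G.chain u = G.chain v + 1 → G.color u ≠ G.color v :=
    fun u v hc h => hG.2.2 u v (Relation.ReflTransGen.single (Or.inl hc)) h
  have hkmem := aux_kIdx_mem G hIcc t htop
  obtain ⟨hzkc, hzkle⟩ := aux_zEl_spec G hIcc hG.1.2.2.1 hG.1.2.2.2.1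
    (i := G.kIdx t) hkmem.1
  refine ⟨G.kIdx t, ?_, ?_⟩
  · refine Finset.mem_filter.mpr ⟨hkmem.1, G.zEl (G.kIdx t), hzkc, ?_⟩
    rw [hγ]; rfl
  · ext s
    simp only [Set.mem_setOf_eq]
    constructor
    · rintro ⟨hs, hne, hκ⟩
      refine ⟨hs, fun hIm => ?_⟩
      obtain ⟨hsI, hOnly, hD, hU⟩ := aux_inv G t ht γ hcov hcc s hs
      have hA := aux_fullAbove G hG hmax t ht htop γ hγ s hsI hOnly
      have hfk := aux_E G hG t ht s hIm hU
      exact aux_G G hG hmax t ht htop γ hγ s hsI hD hA hfk hne hκ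
    · rintro ⟨hs, hIm⟩
      have hsne : s ≠ Finset.univ := by
        rintro rfl
        exact hIm (Finset.subset_univ _)
      obtain ⟨hsI, hOnly, hD, hU⟩ := aux_inv G t ht γ hcov hcc s hs
      have hA := aux_fullAbove G hG hmax t ht htop γ hγ s hsI hOnly
      obtain ⟨x, hxI, hxs⟩ := Finset.not_subset.mp hIm
      have hxfib : x ∈ G.fiber (G.kIdx t) := Finset.filter_subset _ _ hxI
      have hfk : ¬ G.fiber (G.kIdx t) ⊆ s := fun h => hxs (h hxfib)
      have hle1 : G.kIdx t ≤ G.kIdx s := aux_kIdx_le G s hkmem.1 hfk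
      have hjmem := aux_kIdx_mem G hIcc s hsne
      have hle2 : G.kIdx s ≤ G.kIdx t := by
        by_contra hlt
        refine hjmem.2 (fun w hw => hA w ?_)
        have := (Finset.mem_filter.mp hw).2
        omega
      have heq : G.kIdx s = G.kIdx t := le_antisymm hle2 hle1
      refine ⟨hs, hsne, ?_⟩
      show G.color (G.zEl (G.kIdx s)) = γ
      rw [heq, hγ]
      rfl
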